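/- Let G be a finite group. Then Σ_{x,y∈G} x y⁻¹ x y = Σ_K |C_G(g_K)| (K⁺)², where the sum on the right runs over the conjugacy classes K of G, g_K is a representative of K, and K⁺ denotes the sum of the elements of K in the group algebra ℂG. -/
import Mathlib


open scoped Classical

noncomputable section Defs

/-- `χ` is the character of some finite-dimensional complex representation of `G`. -/
def IsChar (G : Type*) [Group G] [Fintype G] (χ : G → ℂ) : Prop :=
  ∃ (n : ℕ) (ρ : Representation ℂ G (Fin n → ℂ)),
    ∀ g : G, χ g = LinearMap.trace ℂ (Fin n → ℂ) (ρ g)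

/-- `χ` is an irreducible character of `G` (a character of norm one). -/
def IsIrrChar (G : Type*) [Group G] [Fintype G] (χ : G → ℂ) : Prop :=
  IsChar G χ ∧ ∑ g : G, χ g * (starRingEnd ℂ) (χ g) = (Fintype.card G : ℂ)

/-- `χ` is a real-valued class function. -/
def IsRealChar (G : Type*) (χ : G → ℂ) : Prop :=
  ∀ g : G, (starRingEnd ℂ) (χ g) = χ g

variable {G : Type*} [Group G] [Fintype G]

/-- extension of a function on a subgroup by zero. -/
def ext0 (H : Subgroup G) (θ : ↥H → ℂ) (g : G) : ℂ :=
  if h : g ∈ H then θ ⟨g, h⟩ else 0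

/-- the character of `G` induced from the character `θ` of the subgroup `H`. -/
def Ind (H : Subgroup G) (θ : ↥H → ℂ) (g : G) : ℂ :=
  (∑ x : G, ext0 H θ (x * g * x⁻¹)) / (Nat.card H : ℂ)

/-- the character of an intermediate subgroup `K` (with `H ≤ K`) induced from `θ` on `H`. -/
def IndTo (H K : Subgroup G) (θ : ↥H → ℂ) (k : ↥K) : ℂ :=
  (∑ x : ↥K, ext0 H θ (↑x * ↑k * (↑x)⁻¹)) / (Nat.card H : ℂ)

/-- the usual inner product of class functions on `H`. -/
def innerChar (H : Subgroup G) (φ ψ : ↥H → ℂ) : ℂ :=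
  (∑ h : ↥H, φ h * (starRingEnd ℂ) (ψ h)) / (Nat.card H : ℂ)

/-- the conjugate character `θ^g : n ↦ θ (g n g⁻¹)`. -/
def conjChar (H : Subgroup G) (θ : ↥H → ℂ) (g : G) : ↥H → ℂ :=
  fun n => ext0 H θ (g * ↑n * g⁻¹)

/-- the Frobenius–Schur indicator. -/
def FSind (H : Type*) [Group H] [Fintype H] (χ : H → ℂ) : ℂ :=
  (∑ h : H, χ (h ^ 2)) / (Fintype.card H : ℂ)

/-- the Gow indicator `ε_t(θ) = (1/|N|) ∑_{n ∈ N} θ((nt)²)`. -/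
def Gow (H : Subgroup G) (θ : ↥H → ℂ) (t : G) : ℂ :=
  (∑ n : ↥H, ext0 H θ ((↑n * t) ^ 2)) / (Nat.card H : ℂ)

end Defs

section Aux
set_option linter.unusedSectionVars false

variable {G : Type*} [Group G] [Fintype G]

lemma conj_eq_conj_iff (x z y : G) :
    y⁻¹ * x * y = z⁻¹ * x * z ↔ x * (y * z⁻¹) = (y * z⁻¹) * x := by
  constructor
  · intro h
    have h2 : y * (y⁻¹ * x * y) * z⁻¹ = y * (z⁻¹ * x * z) * z⁻¹ := by rw [h]
    group at h2; group; exact h2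
  · intro h
    have h2 : y⁻¹ * (x * (y * z⁻¹)) * z = y⁻¹ * ((y * z⁻¹) * x) * z := by rw [h]
    group at h2; group; exact h2

lemma fiber_card (x z : G) :
    (Finset.univ.filter fun y : G => y⁻¹ * x * y = z⁻¹ * x * z).card
      = Nat.card (Subgroup.centralizer ({x} : Set G)) := by
  rw [Nat.card_eq_fintype_card, ← Fintype.card_subtype]
  apply Fintype.card_congr
  refine
    { toFun := fun y => ⟨y.1 * z⁻¹, ?_⟩
      invFun := fun c => ⟨c.1 * z, ?_⟩
      left_inv := fun y => by ext; simp
      right_inv := fun c => by ext; simp }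
  · rw [Subgroup.mem_centralizer_singleton_iff]
    have := y.2
    rw [conj_eq_conj_iff] at this
    exact this.symm
  · rw [conj_eq_conj_iff]
    have := c.2
    rw [Subgroup.mem_centralizer_singleton_iff] at this
    simpa using this.symm

lemma image_conj (x : G) :
    (Finset.univ.image fun y : G => y⁻¹ * x * y) = (ConjClasses.mk x).carrier.toFinset := by
  ext k
  simp only [Finset.mem_image, Finset.mem_univ, true_and, Set.mem_toFinset,
    ConjClasses.mem_carrier_iff_mk_eq, ConjClasses.mk_eq_mk_iff_isConj, isConj_iff]
  constructor
  · rintro ⟨y, rfl⟩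
    exact ⟨y, by group⟩
  · rintro ⟨c, rfl⟩
    exact ⟨c, by group⟩

lemma card_centralizer_conj {a b : G} (h : IsConj a b) :
    Nat.card (Subgroup.centralizer ({a} : Set G))
      = Nat.card (Subgroup.centralizer ({b} : Set G)) := by
  obtain ⟨g, hg⟩ := isConj_iff.mp h
  apply Nat.card_congr
  refine
    { toFun := fun c => ⟨g * c.1 * g⁻¹, ?_⟩
      invFun := fun c => ⟨g⁻¹ * c.1 * g, ?_⟩
      left_inv := fun c => by ext; group
      right_inv := fun c => by ext; group }
  · rw [Subgroup.mem_centralizer_singleton_iff]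
    have hc := Subgroup.mem_centralizer_singleton_iff.mp c.2
    subst hg
    calc g * c.1 * g⁻¹ * (g * a * g⁻¹) = g * (c.1 * a) * g⁻¹ := by group
      _ = g * (a * c.1) * g⁻¹ := by rw [hc]
      _ = g * a * g⁻¹ * (g * c.1 * g⁻¹) := by group
  · rw [Subgroup.mem_centralizer_singleton_iff]
    have hc := Subgroup.mem_centralizer_singleton_iff.mp c.2
    subst hg
    have hc' : c.1 * (g * a * g⁻¹) = (g * a * g⁻¹) * c.1 := hc
    calc g⁻¹ * c.1 * g * a = g⁻¹ * (c.1 * (g * a * g⁻¹)) * g := by group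
      _ = g⁻¹ * ((g * a * g⁻¹) * c.1) * g := by rw [hc']
      _ = a * (g⁻¹ * c.1 * g) := by group

lemma sum_conj (x : G) :
    ∑ y : G, (MonoidAlgebra.single (y⁻¹ * x * y) (1 : ℂ) : MonoidAlgebra ℂ G)
      = (Nat.card (Subgroup.centralizer ({x} : Set G))) •
          ∑ k ∈ (ConjClasses.mk x).carrier.toFinset,
            (MonoidAlgebra.single k (1 : ℂ) : MonoidAlgebra ℂ G) := by
  rw [Finset.sum_comp (fun k : G => (MonoidAlgebra.single k (1 : ℂ) : MonoidAlgebra ℂ G))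
    (fun y : G => y⁻¹ * x * y), image_conj, Finset.smul_sum]
  apply Finset.sum_congr rfl
  intro k hk
  rw [Set.mem_toFinset, ConjClasses.mem_carrier_iff_mk_eq, ConjClasses.mk_eq_mk_iff_isConj,
    isConj_comm, isConj_iff] at hk
  obtain ⟨c, rfl⟩ := hk
  have : (Finset.univ.filter fun y : G => y⁻¹ * x * y = c * x * c⁻¹)
      = Finset.univ.filter fun y : G => y⁻¹ * x * y = (c⁻¹)⁻¹ * x * c⁻¹ := by
    simp
  rw [this, fiber_card]

end Aux

/-- `∑_{x,y} x y⁻¹ x y = ∑_K |C_G(g_K)| (K⁺)²` in `ℂG`. -/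
theorem stmt3 {G : Type*} [Group G] [Fintype G]
    (rep : ConjClasses G → G) (hrep : ∀ c, ConjClasses.mk (rep c) = c) :
    ∑ x : G, ∑ y : G, (MonoidAlgebra.single (x * y⁻¹ * x * y) (1 : ℂ) : MonoidAlgebra ℂ G) =
      ∑ c : ConjClasses G,
        (Nat.card (Subgroup.centralizer ({rep c} : Set G)) : ℂ) •
          (∑ k ∈ c.carrier.toFinset, (MonoidAlgebra.single k (1 : ℂ) : MonoidAlgebra ℂ G)) ^ 2 := by
  have lhs : ∀ x : G,
      ∑ y : G, (MonoidAlgebra.single (x * y⁻¹ * x * y) (1 : ℂ) : MonoidAlgebra ℂ G)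
        = (Nat.card (Subgroup.centralizer ({x} : Set G))) •
            (MonoidAlgebra.single x (1 : ℂ) *
              ∑ k ∈ (ConjClasses.mk x).carrier.toFinset,
                (MonoidAlgebra.single k (1 : ℂ) : MonoidAlgebra ℂ G)) := by
    intro x
    have : ∀ y : G, (MonoidAlgebra.single (x * y⁻¹ * x * y) (1 : ℂ) : MonoidAlgebra ℂ G)
        = MonoidAlgebra.single x (1 : ℂ) * MonoidAlgebra.single (y⁻¹ * x * y) (1 : ℂ) := by
      intro y
      rw [MonoidAlgebra.single_mul_single, one_mul]
      congr 1
      group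
    simp_rw [this, ← Finset.mul_sum, sum_conj, Finset.mul_sum, Finset.smul_sum,
      Finset.mul_sum]
    exact Finset.sum_congr rfl fun k _ => mul_smul_comm _ _ _
  simp_rw [lhs]
  rw [← Finset.sum_fiberwise Finset.univ (fun x : G => ConjClasses.mk x)]
  apply Finset.sum_congr rfl
  intro c _
  have hfil : (Finset.univ.filter fun x : G => ConjClasses.mk x = c) = c.carrier.toFinset := by
    ext x
    simp [ConjClasses.mem_carrier_iff_mk_eq]
  rw [hfil, sq, Finset.sum_mul, Finset.smul_sum]
  apply Finset.sum_congr rfl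
  intro x hx
  rw [Set.mem_toFinset, ConjClasses.mem_carrier_iff_mk_eq] at hx
  have hconj : IsConj x (rep c) := by
    rw [← ConjClasses.mk_eq_mk_iff_isConj, hx, hrep]
  rw [card_centralizer_conj hconj, hx, Nat.cast_smul_eq_nsmul]
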